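/- Let g be a 3-dimensional real unimodular Lie algebra with an inner product and an orthonormal basis {e₁,e₂,e₃} satisfying [e₂,e₃] = λ₁e₁, [e₃,e₁] = λ₂e₂, [e₁,e₂] = λ₃e₃. Then the inner product is cyclic if and only if λ₁ + λ₂ + λ₃ = 0. -/

import Mathlib

/-- For a 3-dimensional real unimodular Lie algebra with orthonormal basis
`{e₁,e₂,e₃}` satisfying `[e₂,e₃] = λ₁e₁`, `[e₃,e₁] = λ₂e₂`, `[e₁,e₂] = λ₃e₃`, the inner
product is cyclic iff `λ₁ + λ₂ + λ₃ = 0`. -/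
theorem three_dim_unimodular_cyclic_iff {L : Type*} [LieRing L] [LieAlgebra ℝ L]
    [FiniteDimensional ℝ L]
    (ip : L →ₗ[ℝ] L →ₗ[ℝ] ℝ)
    (hsymm : ∀ x y : L, ip x y = ip y x)
    (hpos : ∀ x : L, x ≠ 0 → 0 < ip x x)
    (e : Module.Basis (Fin 3) ℝ L)
    (horth : ∀ i j, ip (e i) (e j) = if i = j then 1 else 0)
    (lam : Fin 3 → ℝ)
    (h23 : ⁅e 1, e 2⁆ = lam 0 • e 0)
    (h31 : ⁅e 2, e 0⁆ = lam 1 • e 1)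
    (h12 : ⁅e 0, e 1⁆ = lam 2 • e 2) :
    (∀ X Y Z : L, ip ⁅X, Y⁆ Z + ip ⁅Y, Z⁆ X + ip ⁅Z, X⁆ Y = 0) ↔
      lam 0 + lam 1 + lam 2 = 0 := by
  have h32 : ⁅e 2, e 1⁆ = -(lam 0 • e 0) := by rw [← lie_skew, h23]
  have h13 : ⁅e 0, e 2⁆ = -(lam 1 • e 1) := by rw [← lie_skew, h31]
  have h21 : ⁅e 1, e 0⁆ = -(lam 2 • e 2) := by rw [← lie_skew, h12]
  constructor
  · intro h
    have := h (e 0) (e 1) (e 2)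
    simp only [h12, h23, h31, map_smul, LinearMap.smul_apply, horth, smul_eq_mul] at this
    norm_num at this
    linarith
  · intro hsum X Y Z
    rw [← e.sum_repr X, ← e.sum_repr Y, ← e.sum_repr Z]
    simp only [Fin.sum_univ_three, add_lie, lie_add, smul_lie, lie_smul, lie_self,
      h12, h23, h31, h32, h13, h21, smul_zero, zero_add, add_zero, smul_neg,
      map_add, map_smul, map_neg, LinearMap.add_apply, LinearMap.smul_apply,
      LinearMap.neg_apply, horth, smul_eq_mul, Fin.isValue, Fin.reduceEq, reduceIte,
      mul_zero, zero_mul, mul_one, one_mul, if_true, if_false]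
    linear_combination (e.repr X 0 * e.repr Y 1 * e.repr Z 2 - e.repr X 0 * e.repr Y 2 * e.repr Z 1
      + e.repr X 1 * e.repr Y 2 * e.repr Z 0 - e.repr X 1 * e.repr Y 0 * e.repr Z 2
      + e.repr X 2 * e.repr Y 0 * e.repr Z 1 - e.repr X 2 * e.repr Y 1 * e.repr Z 0) * hsum
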